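/- Let d, K ≥ 1, η > 0, δ > 0, and let μ be a probability measure on ℝ^d with finite (2+η)-th moment which assigns zero mass to every affine hyperplane. Let (X_i)_{i≥0} be i.i.d. random variables with law μ on a probability space (Ω, F, P), and let (γ_i)_{i≥0} ⊂ (0,1) satisfy Σ_i γ_i = ∞ and Σ_i γ_i^{1+δ} < ∞. Define the CLVQ recursion: x^{(0)} ∈ (ℝ^d)^K has pairwise distinct components; at step i, let k_win(i) be the least index k minimizing ‖X_i − x_k^{(i)}‖, set x_k^{(i+1)} = (1 − γ_i) x_k^{(i)} + γ_i X_i if k = k_win(i) and x_k^{(i+1)} = x_k^{(i)} otherwise. Assume that almost surely the grids x^{(i)} converge to a grid x* with pairwise distinct components at which the quadratic distortion G_{K,μ} is differentiable with gradient zero. Then almost surely the moving average of the empirical quadratic distortion converges to the limiting distortion: (1/t) Σ_{i=1}^{t} min_{1≤k≤K} ‖X_i − x_k^{(i)}‖² → G_{K,μ}(x*) as t → ∞. -/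

import Mathlib

open MeasureTheory RealInnerProductSpace Filter

/-- The quadratic distortion of a quantization grid `x` w.r.t. `μ`. -/
noncomputable def distortion {d : ℕ} (μ : Measure (EuclideanSpace ℝ (Fin d))) (K : ℕ)
    (x : Fin K → EuclideanSpace ℝ (Fin d)) : ℝ :=
  ∫ y, (⨅ i : Fin K, ‖y - x i‖ ^ 2) ∂μ

/-- `μ` assigns zero mass to every affine hyperplane. -/
def NullOnHyperplanes {d : ℕ} (μ : Measure (EuclideanSpace ℝ (Fin d))) : Prop :=
  ∀ u : EuclideanSpace ℝ (Fin d), u ≠ 0 → ∀ c : ℝ, μ {y | ⟪y, u⟫ = c} = 0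

section Auxiliary

section cesaro

/-- Shift a Cesàro limit from `range n` form to `Icc 1 t` form. -/
lemma cesaro_Icc {u : ℕ → ℝ} {L : ℝ}
    (h : Tendsto (fun n : ℕ => (∑ i ∈ Finset.range n, u i) / n) atTop (nhds L)) :
    Tendsto (fun t : ℕ => (1 / (t : ℝ)) * ∑ i ∈ Finset.Icc 1 t, u i) atTop (nhds L) := by
  have hsum : ∀ t : ℕ, ∑ i ∈ Finset.range (t + 1), u i = u 0 + ∑ i ∈ Finset.Icc 1 t, u i := by
    intro t
    rw [Finset.range_eq_Ico, ← Finset.Ico_add_one_right_eq_Icc]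
    exact Finset.sum_eq_sum_Ico_succ_bot (Nat.succ_pos t) u
  have h2 : Tendsto (fun t : ℕ => (((t:ℝ) + 1) / t) * ((∑ i ∈ Finset.range (t+1), u i) / (t+1))
      - u 0 * (1 / t)) atTop (nhds (1 * L - u 0 * 0)) := by
    apply Tendsto.sub
    · apply Tendsto.mul
      · have hA : Tendsto (fun t : ℕ => 1 + 1/(t:ℝ)) atTop (nhds 1) := by
          have := tendsto_one_div_atTop_nhds_zero_nat (𝕜 := ℝ)
          simpa using (tendsto_const_nhds (x := (1:ℝ))).add this
        apply hA.congr'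
        filter_upwards [eventually_ge_atTop 1] with t ht
        have ht0 : (t : ℝ) ≠ 0 := by positivity
        field_simp
      · have h3 := h.comp (tendsto_add_atTop_nat 1)
        apply h3.congr
        intro x
        simp only [Function.comp]
        push_cast
        ring
    · exact (tendsto_one_div_atTop_nhds_zero_nat).const_mul _
  rw [one_mul, mul_zero, sub_zero] at h2
  apply h2.congr'
  filter_upwards [eventually_ge_atTop 1] with t ht
  have ht0 : (t : ℝ) ≠ 0 := by positivity
  rw [hsum t]
  push_cast
  field_simp
  ring

lemma cesaro_weighted {c e : ℕ → ℝ} {L : ℝ} (hc : ∀ i, 0 ≤ c i) (he : ∀ i, 0 ≤ e i)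
    (hL : Tendsto (fun t : ℕ => (1 / (t : ℝ)) * ∑ i ∈ Finset.Icc 1 t, c i) atTop (nhds L))
    (he0 : Tendsto e atTop (nhds 0)) :
    Tendsto (fun t : ℕ => (1 / (t : ℝ)) * ∑ i ∈ Finset.Icc 1 t, c i * e i) atTop (nhds 0) := by
  have havg_nonneg : ∀ t : ℕ, 0 ≤ (1 / (t : ℝ)) * ∑ i ∈ Finset.Icc 1 t, c i := by
    intro t
    apply mul_nonneg (by positivity) (Finset.sum_nonneg fun i _ => hc i)
  have hL0 : 0 ≤ L := ge_of_tendsto' hL havg_nonneg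
  rw [Metric.tendsto_atTop]
  intro ε hε
  set ε' : ℝ := ε / (2 * (L + 1)) with hε'def
  have hL1 : (0:ℝ) < L + 1 := by linarith
  have hε' : 0 < ε' := by positivity
  obtain ⟨N₀, hN₀⟩ := (Metric.tendsto_atTop.1 he0 ε' hε')
  have he_small : ∀ i ≥ N₀, e i ≤ ε' := by
    intro i hi
    have := hN₀ i hi
    rw [Real.dist_eq, sub_zero, abs_of_nonneg (he i)] at this
    exact this.le
  have havg_lt : ∀ᶠ t : ℕ in atTop, (1 / (t : ℝ)) * ∑ i ∈ Finset.Icc 1 t, c i < L + 1 :=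
    hL.eventually_lt_const (lt_add_one L)
  set C₀ : ℝ := ∑ i ∈ Finset.Icc 1 N₀, c i * e i with hC₀def
  have hC₀ : 0 ≤ C₀ := Finset.sum_nonneg fun i _ => mul_nonneg (hc i) (he i)
  have hhead : Tendsto (fun t : ℕ => (1 / (t:ℝ)) * C₀) atTop (nhds 0) := by
    simpa using (tendsto_one_div_atTop_nhds_zero_nat).mul_const C₀
  have hhead' : ∀ᶠ t : ℕ in atTop, (1 / (t:ℝ)) * C₀ < ε / 2 := by
    have := (Metric.tendsto_atTop.1 hhead (ε/2) (by positivity))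
    obtain ⟨N, hN⟩ := this
    filter_upwards [eventually_ge_atTop N] with t ht
    have := hN t ht
    rw [Real.dist_eq, sub_zero] at this
    exact (le_abs_self _).trans_lt this
  rw [← eventually_atTop]
  filter_upwards [havg_lt, hhead', eventually_ge_atTop N₀, eventually_ge_atTop 1]
    with t havg hhd htN₀ ht1
  rw [Real.dist_eq, sub_zero]
  have hts : ∀ i, 0 ≤ c i * e i := fun i => mul_nonneg (hc i) (he i)
  have hsum_nonneg : 0 ≤ ∑ i ∈ Finset.Icc 1 t, c i * e i := Finset.sum_nonneg fun i _ => hts i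
  have ht0 : (0:ℝ) < (t:ℝ) := by exact_mod_cast ht1
  rw [abs_of_nonneg (mul_nonneg (by positivity) hsum_nonneg)]
  have hsplit : ∑ i ∈ Finset.Icc 1 t, c i * e i
      = ∑ i ∈ Finset.Ioc 0 N₀, c i * e i + ∑ i ∈ Finset.Ioc N₀ t, c i * e i := by
    have e1 : Finset.Icc 1 t = Finset.Ioc 0 t := Finset.Icc_add_one_left_eq_Ioc 0 t
    rw [e1, ← Finset.sum_Ioc_consecutive _ (Nat.zero_le N₀) htN₀]
  have hhead_eq : ∑ i ∈ Finset.Ioc 0 N₀, c i * e i = C₀ := by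
    rw [hC₀def, show Finset.Icc 1 N₀ = Finset.Ioc 0 N₀ from Finset.Icc_add_one_left_eq_Ioc 0 N₀]
  have htail : ∑ i ∈ Finset.Ioc N₀ t, c i * e i ≤ ε' * ∑ i ∈ Finset.Icc 1 t, c i := by
    calc ∑ i ∈ Finset.Ioc N₀ t, c i * e i ≤ ∑ i ∈ Finset.Ioc N₀ t, c i * ε' := by
          apply Finset.sum_le_sum
          intro i hi
          rw [Finset.mem_Ioc] at hi
          exact mul_le_mul_of_nonneg_left (he_small i (le_of_lt hi.1)) (hc i)
      _ = ε' * ∑ i ∈ Finset.Ioc N₀ t, c i := by rw [Finset.mul_sum]; congr 1; funext i; ring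
      _ ≤ ε' * ∑ i ∈ Finset.Icc 1 t, c i := by
          apply mul_le_mul_of_nonneg_left _ hε'.le
          rw [show Finset.Icc 1 t = Finset.Ioc 0 t from Finset.Icc_add_one_left_eq_Ioc 0 t]
          apply Finset.sum_le_sum_of_subset_of_nonneg
          · intro i hi
            rw [Finset.mem_Ioc] at hi ⊢
            omega
          · intro i _ _
            exact hc i
  calc (1 / (t:ℝ)) * ∑ i ∈ Finset.Icc 1 t, c i * e i
      = (1 / (t:ℝ)) * C₀ + (1 / (t:ℝ)) * ∑ i ∈ Finset.Ioc N₀ t, c i * e i := by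
        rw [hsplit, hhead_eq]; ring
    _ ≤ (1 / (t:ℝ)) * C₀ + (1 / (t:ℝ)) * (ε' * ∑ i ∈ Finset.Icc 1 t, c i) := by
        gcongr
    _ = (1 / (t:ℝ)) * C₀ + ε' * ((1 / (t:ℝ)) * ∑ i ∈ Finset.Icc 1 t, c i) := by ring
    _ < ε / 2 + ε' * (L + 1) := by
        apply add_lt_add_of_lt_of_le hhd
        exact mul_le_mul_of_nonneg_left havg.le hε'.le
    _ = ε / 2 + ε / 2 := by
        rw [hε'def]
        field_simp
    _ = ε := by ring

end cesaro

variable {d K : ℕ}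

local notation "E" => EuclideanSpace ℝ (Fin d)

/-- The quantization error function. -/
noncomputable def qf (z : Fin K → EuclideanSpace ℝ (Fin d)) (y : EuclideanSpace ℝ (Fin d)) : ℝ :=
  ⨅ k : Fin K, ‖y - z k‖ ^ 2

lemma qf_nonneg (z : Fin K → E) (y : E) : 0 ≤ qf z y := by
  rcases Nat.eq_zero_or_pos K with h | h
  · subst h; simp [qf, Real.iInf_of_isEmpty]
  · have : Nonempty (Fin K) := ⟨⟨0, h⟩⟩
    exact le_ciInf fun k => by positivity

lemma qf_exists_min (hK : 0 < K) (z : Fin K → E) (y : E) :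
    ∃ k, qf z y = ‖y - z k‖ ^ 2 ∧ ∀ j, ‖y - z k‖ ≤ ‖y - z j‖ := by
  have : Nonempty (Fin K) := ⟨⟨0, hK⟩⟩
  obtain ⟨k, hk⟩ := Finite.exists_min (fun k => ‖y - z k‖ ^ 2)
  refine ⟨k, le_antisymm (ciInf_le (Set.finite_range _).bddBelow k) (le_ciInf hk), fun j => ?_⟩
  have := hk j
  nlinarith [norm_nonneg (y - z k), norm_nonneg (y - z j)]

lemma qf_le (hK : 0 < K) (z : Fin K → E) (y : E) (k : Fin K) : qf z y ≤ ‖y - z k‖ ^ 2 := by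
  have : Nonempty (Fin K) := ⟨⟨0, hK⟩⟩
  exact ciInf_le (Set.finite_range _).bddBelow k

lemma qf_lip_one (hK : 0 < K) (z w : Fin K → E) (y : E) :
    qf z y - qf w y ≤ (2 * ‖y‖ + 3 * (‖z‖ + ‖w‖)) * dist z w := by
  obtain ⟨k, hk, hkmin⟩ := qf_exists_min hK w y
  have h1 : qf z y ≤ ‖y - z k‖ ^ 2 := qf_le hK z y k
  have h2 : ‖y - z k‖ ≤ ‖y - w k‖ + ‖w k - z k‖ := by
    calc ‖y - z k‖ = ‖(y - w k) + (w k - z k)‖ := by rw [sub_add_sub_cancel]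
      _ ≤ _ := norm_add_le _ _
  have h3 : ‖w k - z k‖ ≤ dist z w := by
    rw [← dist_eq_norm, dist_comm]; exact dist_le_pi_dist z w k
  have h4 : ‖y - w k‖ ≤ ‖y‖ + ‖w‖ := by
    calc ‖y - w k‖ ≤ ‖y‖ + ‖w k‖ := norm_sub_le _ _
      _ ≤ ‖y‖ + ‖w‖ := by gcongr; exact norm_le_pi_norm w k
  have h5 : dist z w ≤ ‖z‖ + ‖w‖ := by
    rw [dist_eq_norm]; exact norm_sub_le _ _
  have h6 : ‖y - z k‖ ^ 2 ≤ ‖y - w k‖ ^ 2 + (2 * ‖y - w k‖ + ‖w k - z k‖) * ‖w k - z k‖ := by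
    nlinarith [norm_nonneg (y - z k), norm_nonneg (y - w k), norm_nonneg (w k - z k)]
  have hd0 : (0:ℝ) ≤ dist z w := dist_nonneg
  have hy0 : (0:ℝ) ≤ ‖y‖ := norm_nonneg y
  have hw0 : (0:ℝ) ≤ ‖w‖ := norm_nonneg w
  have hz0 : (0:ℝ) ≤ ‖z‖ := norm_nonneg z
  have key : (2 * ‖y - w k‖ + ‖w k - z k‖) * ‖w k - z k‖
      ≤ (2 * ‖y‖ + 3 * (‖z‖ + ‖w‖)) * dist z w := by
    apply mul_le_mul _ h3 (norm_nonneg _) (by positivity)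
    linarith
  linarith

lemma qf_lip (hK : 0 < K) (z w : Fin K → E) (y : E) :
    |qf z y - qf w y| ≤ (2 * ‖y‖ + 3 * (‖z‖ + ‖w‖)) * dist z w := by
  rw [abs_sub_le_iff]
  constructor
  · exact qf_lip_one hK z w y
  · have := qf_lip_one hK w z y
    rwa [dist_comm w z, add_comm ‖w‖ ‖z‖] at this

lemma qf_measurable (z : Fin K → E) : Measurable (qf z) :=
  Measurable.iInf (fun k => by fun_prop)

lemma qf_le_bound (hK : 0 < K) (z : Fin K → E) (y : E) :
    qf z y ≤ 2 * ‖y‖ ^ 2 + 2 * ‖z‖ ^ 2 := by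
  have h := qf_le hK z y ⟨0, hK⟩
  have h2 : ‖y - z ⟨0, hK⟩‖ ≤ ‖y‖ + ‖z‖ := by
    calc ‖y - z ⟨0, hK⟩‖ ≤ ‖y‖ + ‖z ⟨0, hK⟩‖ := norm_sub_le _ _
      _ ≤ _ := by gcongr; exact norm_le_pi_norm z _
  nlinarith [mul_self_le_mul_self (norm_nonneg (y - z ⟨0, hK⟩)) h2, sq_nonneg (‖y‖ - ‖z‖)]

lemma qf_integrable (hK : 0 < K) {μ : Measure (EuclideanSpace ℝ (Fin d))} [IsProbabilityMeasure μ]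
    (h2 : Integrable (fun y : E => ‖y‖ ^ 2) μ) (z : Fin K → E) :
    Integrable (qf z) μ := by
  have hbd : Integrable (fun y : E => 2 * ‖y‖ ^ 2 + 2 * ‖z‖ ^ 2) μ :=
    (h2.const_mul 2).add (integrable_const _)
  apply Integrable.mono' hbd (qf_measurable z).aestronglyMeasurable
  filter_upwards with y
  rw [Real.norm_eq_abs, abs_of_nonneg (qf_nonneg z y)]
  exact qf_le_bound hK z y

lemma distortion_lip (hK : 0 < K) {μ : Measure (EuclideanSpace ℝ (Fin d))}
    [IsProbabilityMeasure μ]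
    (hI1 : Integrable (fun y : E => ‖y‖) μ) (h2 : Integrable (fun y : E => ‖y‖ ^ 2) μ)
    (z w : Fin K → E) :
    |(∫ y, qf z y ∂μ) - ∫ y, qf w y ∂μ|
      ≤ (2 * (∫ y, ‖y‖ ∂μ) + 3 * (‖z‖ + ‖w‖)) * dist z w := by
  rw [← integral_sub (qf_integrable hK h2 z) (qf_integrable hK h2 w)]
  have h1 : |∫ y, (qf z y - qf w y) ∂μ| ≤ ∫ y, |qf z y - qf w y| ∂μ := by
    simpa [Real.norm_eq_abs] using
      norm_integral_le_integral_norm (μ := μ) (f := fun y => qf z y - qf w y)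
  refine h1.trans ?_
  have hint1 : Integrable (fun y => |qf z y - qf w y|) μ :=
    ((qf_integrable hK h2 z).sub (qf_integrable hK h2 w)).abs
  have hint2 : Integrable (fun y : E => (2 * ‖y‖ + 3 * (‖z‖ + ‖w‖)) * dist z w) μ :=
    (((hI1.const_mul 2).add (integrable_const _)).mul_const _)
  have hmono := integral_mono hint1 hint2 (fun y => qf_lip hK z w y)
  refine hmono.trans_eq ?_
  rw [integral_mul_const]
  congr 1
  rw [integral_add (hI1.const_mul 2) (integrable_const _), integral_const_mul, integral_const]
  simp

open ProbabilityTheory in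
/-- SLLN for `g ∘ X i` where `X i` are iid with law `μ`. -/
lemma slln_comp {Ω : Type*} [MeasurableSpace Ω] {P : Measure Ω} [IsProbabilityMeasure P]
    {μ : Measure E} [IsProbabilityMeasure μ]
    {X : ℕ → Ω → E} (hXmeas : ∀ i, Measurable (X i))
    (hXindep : iIndepFun X P)
    (hXlaw : ∀ i, P.map (X i) = μ)
    (g : E → ℝ) (hg : Measurable g) (hgint : Integrable g μ) :
    ∀ᵐ ω ∂P, Tendsto (fun n : ℕ => (∑ i ∈ Finset.range n, g (X i ω)) / n) atTop
      (nhds (∫ y, g y ∂μ)) := by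
  have hint : Integrable (fun ω => g (X 0 ω)) P := by
    have := (integrable_map_measure hg.aestronglyMeasurable (hXmeas 0).aemeasurable).mp
      (by rw [hXlaw 0]; exact hgint)
    exact this
  have hcomp : iIndepFun
      (fun i ω => g (X i ω)) P := hXindep.comp (fun _ => g) (fun _ => hg)
  have hindep : Pairwise (Function.onFun (IndepFun · · P) (fun i ω => g (X i ω))) :=
    fun i j hij => hcomp.indepFun hij
  have hident : ∀ i, IdentDistrib (fun ω => g (X i ω)) (fun ω => g (X 0 ω)) P P := by
    intro i
    refine ⟨(hg.comp (hXmeas i)).aemeasurable, (hg.comp (hXmeas 0)).aemeasurable, ?_⟩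
    have h1 : P.map (fun ω => g (X i ω)) = μ.map g := by
      rw [← hXlaw i]; exact (Measure.map_map hg (hXmeas i)).symm
    have h2 : P.map (fun ω => g (X 0 ω)) = μ.map g := by
      rw [← hXlaw 0]; exact (Measure.map_map hg (hXmeas 0)).symm
    rw [h1, h2]
  have := strong_law_ae_real (fun i ω => g (X i ω)) hint hindep hident
  have heq : P[fun ω => g (X 0 ω)] = ∫ y, g y ∂μ := by
    rw [← hXlaw 0, integral_map (hXmeas 0).aemeasurable hg.aestronglyMeasurable]
  rwa [heq] at this

lemma integrable_norm_sq {μ : Measure E} [IsProbabilityMeasure μ] {η : ℝ} (hη : 0 < η)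
    (hμmom : Integrable (fun y : E => ‖y‖ ^ ((2 : ℝ) + η)) μ) :
    Integrable (fun y : E => ‖y‖ ^ 2) μ := by
  have hbd : Integrable (fun y : E => 1 + ‖y‖ ^ ((2:ℝ) + η)) μ :=
    (integrable_const (1:ℝ)).add hμmom
  apply Integrable.mono' hbd ((by fun_prop : Measurable fun y : E => ‖y‖ ^ 2).aestronglyMeasurable)
  filter_upwards with y
  rw [Real.norm_eq_abs, abs_of_nonneg (by positivity)]
  rcases le_or_gt ‖y‖ 1 with h | h
  · have h1 : ‖y‖ ^ 2 ≤ 1 := pow_le_one₀ (norm_nonneg y) h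
    have h2 : (0:ℝ) ≤ ‖y‖ ^ ((2:ℝ) + η) := Real.rpow_nonneg (norm_nonneg y) _
    linarith
  · have h1 : ‖y‖ ^ 2 = ‖y‖ ^ ((2:ℝ)) := by
      rw [← Real.rpow_natCast ‖y‖ 2]; norm_num
    have h2 : ‖y‖ ^ ((2:ℝ)) ≤ ‖y‖ ^ ((2:ℝ) + η) :=
      Real.rpow_le_rpow_of_exponent_le h.le (by linarith)
    rw [h1]
    linarith

lemma integrable_norm_one {μ : Measure E} [IsProbabilityMeasure μ]
    (h2 : Integrable (fun y : E => ‖y‖ ^ 2) μ) :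
    Integrable (fun y : E => ‖y‖) μ := by
  have hbd : Integrable (fun y : E => 1 + ‖y‖ ^ 2) μ := (integrable_const (1:ℝ)).add h2
  apply Integrable.mono' hbd ((by fun_prop : Measurable fun y : E => ‖y‖).aestronglyMeasurable)
  filter_upwards with y
  rw [Real.norm_eq_abs, abs_of_nonneg (norm_nonneg y)]
  nlinarith [norm_nonneg y, sq_nonneg (‖y‖ - 1)]

end Auxiliary

theorem stmt17 (d K : ℕ) (hd : 1 ≤ d) (hK : 1 ≤ K) (η δ : ℝ) (hη : 0 < η) (hδ : 0 < δ)
    (μ : Measure (EuclideanSpace ℝ (Fin d))) [IsProbabilityMeasure μ]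
    (hμmom : Integrable (fun y => ‖y‖ ^ ((2 : ℝ) + η)) μ)
    (hμH : NullOnHyperplanes μ)
    (Ω : Type*) [MeasurableSpace Ω] (P : Measure Ω) [IsProbabilityMeasure P]
    (X : ℕ → Ω → EuclideanSpace ℝ (Fin d))
    (hXmeas : ∀ i, Measurable (X i))
    (hXindep : ProbabilityTheory.iIndepFun X P)
    (hXlaw : ∀ i, P.map (X i) = μ)
    (γ : ℕ → ℝ) (hγ : ∀ i, γ i ∈ Set.Ioo (0 : ℝ) 1)
    (hγdiv : Tendsto (fun n => ∑ i ∈ Finset.range n, γ i) atTop atTop)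
    (hγsum : Summable (fun i => γ i ^ ((1 : ℝ) + δ)))
    (x0 : Fin K → EuclideanSpace ℝ (Fin d)) (hx0 : Function.Injective x0)
    (xs : ℕ → Ω → Fin K → EuclideanSpace ℝ (Fin d))
    (kwin : ℕ → Ω → Fin K)
    (hxs0 : ∀ ω, xs 0 ω = x0)
    (hkwin : ∀ i ω,
      (∀ k, ‖X i ω - xs i ω (kwin i ω)‖ ≤ ‖X i ω - xs i ω k‖) ∧
      (∀ j, j < kwin i ω → ‖X i ω - xs i ω (kwin i ω)‖ < ‖X i ω - xs i ω j‖))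
    (hxsucc : ∀ i ω k, xs (i + 1) ω k =
      if k = kwin i ω then (1 - γ i) • xs i ω k + γ i • X i ω else xs i ω k)
    (hconv : ∀ᵐ ω ∂P, ∃ xstar : Fin K → EuclideanSpace ℝ (Fin d),
      Function.Injective xstar ∧
      HasFDerivAt (fun z : Fin K → EuclideanSpace ℝ (Fin d) => distortion μ K z)
        (0 : (Fin K → EuclideanSpace ℝ (Fin d)) →L[ℝ] ℝ) xstar ∧
      Tendsto (fun i => xs i ω) atTop (nhds xstar)) :
    ∀ᵐ ω ∂P, ∀ xstar : Fin K → EuclideanSpace ℝ (Fin d),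
      Function.Injective xstar →
      HasFDerivAt (fun z : Fin K → EuclideanSpace ℝ (Fin d) => distortion μ K z)
        (0 : (Fin K → EuclideanSpace ℝ (Fin d)) →L[ℝ] ℝ) xstar →
      Tendsto (fun i => xs i ω) atTop (nhds xstar) →
      Tendsto (fun t : ℕ =>
          (1 / (t : ℝ)) * ∑ i ∈ Finset.Icc 1 t, ⨅ k : Fin K, ‖X i ω - xs i ω k‖ ^ 2)
        atTop (nhds (distortion μ K xstar)) := by
  classical
  have hKpos : 0 < K := hK
  have hI2 : Integrable (fun y : EuclideanSpace ℝ (Fin d) => ‖y‖ ^ 2) μ :=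
    integrable_norm_sq hη hμmom
  have hI1int : Integrable (fun y : EuclideanSpace ℝ (Fin d) => ‖y‖) μ := integrable_norm_one hI2
  set I1 : ℝ := ∫ y, ‖y‖ ∂μ with hI1def
  have hI1nonneg : 0 ≤ I1 := integral_nonneg (fun y => norm_nonneg y)
  -- countable dense set of grids
  obtain ⟨s, hsc, hsd⟩ :=
    TopologicalSpace.exists_countable_dense (Fin K → EuclideanSpace ℝ (Fin d))
  -- SLLN events
  have hA1 : ∀ᵐ ω ∂P, Tendsto
      (fun n : ℕ => (∑ i ∈ Finset.range n, ‖X i ω‖) / n) atTop (nhds I1) :=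
    slln_comp hXmeas hXindep hXlaw _ (by fun_prop) hI1int
  have hA2 : ∀ᵐ ω ∂P, ∀ z ∈ s, Tendsto
      (fun n : ℕ => (∑ i ∈ Finset.range n, qf z (X i ω)) / n) atTop
      (nhds (∫ y, qf z y ∂μ)) := by
    rw [ae_ball_iff hsc]
    intro z _
    exact slln_comp hXmeas hXindep hXlaw (qf z) (qf_measurable z) (qf_integrable hKpos hI2 z)
  filter_upwards [hA1, hA2] with ω h1 h2
  intro xstar hinj hderiv hcv
  -- setup
  have hdist_eq : distortion μ K xstar = ∫ y, qf xstar y ∂μ := rfl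
  have hN : Tendsto (fun t : ℕ => (1 / (t:ℝ)) * ∑ i ∈ Finset.Icc 1 t, ‖X i ω‖)
      atTop (nhds I1) := cesaro_Icc h1
  set e : ℕ → ℝ := fun i => dist (xs i ω) xstar with hedef
  have he0 : ∀ i, 0 ≤ e i := fun i => dist_nonneg
  have helim : Tendsto e atTop (nhds 0) := tendsto_iff_dist_tendsto_zero.mp hcv
  obtain ⟨B, hB⟩ : ∃ B, ∀ i, e i ≤ B := by
    obtain ⟨B, hB⟩ := helim.bddAbove_range
    exact ⟨B, fun i => hB (Set.mem_range_self i)⟩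
  have hB0 : 0 ≤ B := (he0 0).trans (hB 0)
  set C0 : ℝ := 3 * (2 * ‖xstar‖ + B) with hC0def
  have hC0nonneg : 0 ≤ C0 := by positivity
  have hxsnorm : ∀ i, ‖xs i ω‖ ≤ ‖xstar‖ + B := by
    intro i
    have h' : ‖xs i ω‖ - ‖xstar‖ ≤ ‖xs i ω - xstar‖ := norm_sub_norm_le _ _
    have h'' : ‖xs i ω - xstar‖ = e i := (dist_eq_norm _ _).symm
    have := hB i
    linarith [h'' ▸ h']
  set c : ℕ → ℝ := fun i => 2 * ‖X i ω‖ + C0 with hcdef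
  have hc0 : ∀ i, 0 ≤ c i := fun i => by positivity
  have hdiff : ∀ i, |qf (xs i ω) (X i ω) - qf xstar (X i ω)| ≤ c i * e i := by
    intro i
    refine (qf_lip hKpos (xs i ω) xstar (X i ω)).trans ?_
    have h3 : 3 * (‖xs i ω‖ + ‖xstar‖) ≤ C0 := by
      have := hxsnorm i
      rw [hC0def]
      linarith
    apply mul_le_mul_of_nonneg_right _ (he0 i)
    rw [hcdef]
    simp only
    linarith
  -- Cesàro limit of c
  have hcavg : Tendsto (fun t : ℕ => (1 / (t:ℝ)) * ∑ i ∈ Finset.Icc 1 t, c i)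
      atTop (nhds (2 * I1 + C0)) := by
    have hbase : Tendsto (fun t : ℕ =>
        2 * ((1 / (t:ℝ)) * ∑ i ∈ Finset.Icc 1 t, ‖X i ω‖) + C0) atTop (nhds (2 * I1 + C0)) :=
      ((hN.const_mul 2).add tendsto_const_nhds)
    apply hbase.congr'
    filter_upwards [eventually_ge_atTop 1] with t ht
    have ht0 : (t:ℝ) ≠ 0 := by positivity
    rw [hcdef]
    simp only
    rw [Finset.sum_add_distrib, Finset.sum_const, Nat.card_Icc]
    simp only [Nat.add_sub_cancel, nsmul_eq_mul]
    rw [← Finset.mul_sum]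
    field_simp
  -- difference term tends to 0
  have hD : Tendsto (fun t : ℕ => (1 / (t:ℝ)) * ∑ i ∈ Finset.Icc 1 t,
      (qf (xs i ω) (X i ω) - qf xstar (X i ω))) atTop (nhds 0) := by
    apply squeeze_zero_norm _ (cesaro_weighted hc0 he0 hcavg helim)
    intro t
    rw [Real.norm_eq_abs, abs_mul, abs_of_nonneg (by positivity : (0:ℝ) ≤ 1 / (t:ℝ))]
    apply mul_le_mul_of_nonneg_left _ (by positivity : (0:ℝ) ≤ 1 / (t:ℝ))
    refine (Finset.abs_sum_le_sum_abs _ _).trans ?_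
    exact Finset.sum_le_sum (fun i _ => hdiff i)
  -- main term tends to the distortion
  have hA : Tendsto (fun t : ℕ => (1 / (t:ℝ)) * ∑ i ∈ Finset.Icc 1 t, qf xstar (X i ω))
      atTop (nhds (distortion μ K xstar)) := by
    rw [Metric.tendsto_atTop]
    intro ε hε
    set Qmax : ℝ := 2 * I1 + 2 + 3 * (2 * ‖xstar‖ + 1) with hQdef
    have hQpos : 0 < Qmax := by positivity
    set ρ : ℝ := min 1 (ε / (3 * Qmax)) with hρdef
    have hρpos : 0 < ρ := lt_min one_pos (by positivity)
    have hρ1 : ρ ≤ 1 := min_le_left _ _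
    have hρε : ρ * Qmax ≤ ε / 3 := by
      have h' : ρ ≤ ε / (3 * Qmax) := min_le_right _ _
      calc ρ * Qmax ≤ (ε / (3 * Qmax)) * Qmax := by
            apply mul_le_mul_of_nonneg_right h' hQpos.le
        _ = ε / 3 := by field_simp
    obtain ⟨z, hzs, hzd'⟩ := Metric.mem_closure_iff.1 (hsd xstar) ρ hρpos
    have hzd : dist z xstar < ρ := by rwa [dist_comm] at hzd'
    have hznorm : ‖z‖ ≤ ‖xstar‖ + 1 := by
      have h' : ‖z‖ - ‖xstar‖ ≤ ‖z - xstar‖ := norm_sub_norm_le _ _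
      rw [← dist_eq_norm] at h'
      linarith [hzd.le.trans hρ1]
    set Cz : ℝ := 3 * (‖z‖ + ‖xstar‖) with hCzdef
    have hCz : Cz ≤ 3 * (2 * ‖xstar‖ + 1) := by
      rw [hCzdef]; linarith
    -- empirical average for z converges
    have hz2 : Tendsto (fun t : ℕ => (1 / (t:ℝ)) * ∑ i ∈ Finset.Icc 1 t, qf z (X i ω))
        atTop (nhds (∫ y, qf z y ∂μ)) := cesaro_Icc (h2 z hzs)
    have hz3 : ∀ᶠ t : ℕ in atTop,
        |(1 / (t:ℝ)) * (∑ i ∈ Finset.Icc 1 t, qf z (X i ω)) - ∫ y, qf z y ∂μ| < ε / 3 := by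
      have := Metric.tendsto_atTop.1 hz2 (ε/3) (by positivity)
      obtain ⟨N, hN'⟩ := this
      filter_upwards [eventually_ge_atTop N] with t ht
      have := hN' t ht
      rwa [Real.dist_eq] at this
    have havg_lt : ∀ᶠ t : ℕ in atTop,
        (1 / (t:ℝ)) * ∑ i ∈ Finset.Icc 1 t, ‖X i ω‖ < I1 + 1 :=
      hN.eventually_lt_const (lt_add_one I1)
    -- distortion distance
    have hint_dist : |(∫ y, qf xstar y ∂μ) - ∫ y, qf z y ∂μ| ≤ ε / 3 := by
      have h' := distortion_lip hKpos hI1int hI2 xstar z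
      refine h'.trans ?_
      have hdle : dist xstar z ≤ ρ := by rw [dist_comm]; exact hzd.le
      calc (2 * (∫ y, ‖y‖ ∂μ) + 3 * (‖xstar‖ + ‖z‖)) * dist xstar z
          ≤ Qmax * ρ := by
            apply mul_le_mul _ hdle dist_nonneg hQpos.le
            rw [hQdef, ← hI1def]
            linarith [hznorm, hI1nonneg]
        _ = ρ * Qmax := by ring
        _ ≤ ε / 3 := hρε
    rw [← eventually_atTop]
    filter_upwards [hz3, havg_lt, eventually_ge_atTop 1] with t hz3t havgt ht1
    have ht0 : (0:ℝ) < (t:ℝ) := by exact_mod_cast ht1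
    -- empirical Lipschitz bound
    have hemp : |(1 / (t:ℝ)) * (∑ i ∈ Finset.Icc 1 t, qf xstar (X i ω))
        - (1 / (t:ℝ)) * (∑ i ∈ Finset.Icc 1 t, qf z (X i ω))| ≤ ε / 3 := by
      rw [← mul_sub, ← Finset.sum_sub_distrib, abs_mul,
        abs_of_nonneg (by positivity : (0:ℝ) ≤ 1/(t:ℝ))]
      have hstep : |∑ i ∈ Finset.Icc 1 t, (qf xstar (X i ω) - qf z (X i ω))|
          ≤ ∑ i ∈ Finset.Icc 1 t, (2 * ‖X i ω‖ + Cz) * dist xstar z := by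
        refine (Finset.abs_sum_le_sum_abs _ _).trans ?_
        apply Finset.sum_le_sum
        intro i _
        have hlip := qf_lip hKpos xstar z (X i ω)
        exact hlip.trans_eq (by rw [hCzdef]; ring)
      refine (mul_le_mul_of_nonneg_left hstep
        (by positivity : (0:ℝ) ≤ 1/(t:ℝ))).trans ?_
      have ht0' : (t:ℝ) ≠ 0 := ne_of_gt ht0
      have hsumeq : (1/(t:ℝ)) * ∑ i ∈ Finset.Icc 1 t, (2 * ‖X i ω‖ + Cz) * dist xstar z
          = (2 * ((1/(t:ℝ)) * ∑ i ∈ Finset.Icc 1 t, ‖X i ω‖) + Cz) * dist xstar z := by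
        rw [← Finset.sum_mul, ← mul_assoc]
        congr 1
        rw [Finset.sum_add_distrib, Finset.sum_const, Nat.card_Icc]
        simp only [Nat.add_sub_cancel, nsmul_eq_mul]
        rw [← Finset.mul_sum]
        field_simp
      rw [hsumeq]
      have hdle : dist xstar z ≤ ρ := by rw [dist_comm]; exact hzd.le
      have hCz0 : 0 ≤ Cz := by rw [hCzdef]; positivity
      calc (2 * ((1/(t:ℝ)) * ∑ i ∈ Finset.Icc 1 t, ‖X i ω‖) + Cz) * dist xstar z
          ≤ Qmax * ρ := by
            apply mul_le_mul _ hdle dist_nonneg hQpos.le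
            rw [hQdef]
            have h2' : 2 * ((1/(t:ℝ)) * ∑ i ∈ Finset.Icc 1 t, ‖X i ω‖) ≤ 2 * (I1 + 1) := by
              linarith [havgt]
            linarith [hCz]
        _ = ρ * Qmax := by ring
        _ ≤ ε / 3 := hρε
    rw [Real.dist_eq, hdist_eq]
    have htineq : |(1 / (t:ℝ)) * (∑ i ∈ Finset.Icc 1 t, qf xstar (X i ω)) - ∫ y, qf xstar y ∂μ|
        ≤ |(1 / (t:ℝ)) * (∑ i ∈ Finset.Icc 1 t, qf xstar (X i ω))
            - (1 / (t:ℝ)) * (∑ i ∈ Finset.Icc 1 t, qf z (X i ω))|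
          + |(1 / (t:ℝ)) * (∑ i ∈ Finset.Icc 1 t, qf z (X i ω)) - ∫ y, qf z y ∂μ|
          + |(∫ y, qf z y ∂μ) - ∫ y, qf xstar y ∂μ| := by
      have := abs_sub_le ((1 / (t:ℝ)) * (∑ i ∈ Finset.Icc 1 t, qf xstar (X i ω)))
        ((1 / (t:ℝ)) * (∑ i ∈ Finset.Icc 1 t, qf z (X i ω))) (∫ y, qf xstar y ∂μ)
      have h4 := abs_sub_le ((1 / (t:ℝ)) * (∑ i ∈ Finset.Icc 1 t, qf z (X i ω)))
        (∫ y, qf z y ∂μ) (∫ y, qf xstar y ∂μ)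
      linarith
    have hlast : |(∫ y, qf z y ∂μ) - ∫ y, qf xstar y ∂μ| ≤ ε / 3 := by
      rwa [abs_sub_comm] at hint_dist
    refine lt_of_le_of_lt htineq ?_
    linarith [hemp, hz3t, hlast]
  -- combine
  have hfinal := hA.add hD
  rw [add_zero] at hfinal
  show Tendsto (fun t : ℕ =>
      (1 / (t : ℝ)) * ∑ i ∈ Finset.Icc 1 t, qf (xs i ω) (X i ω))
    atTop (nhds (distortion μ K xstar))
  apply hfinal.congr
  intro t
  rw [← mul_add, ← Finset.sum_add_distrib]
  exact congrArg _ (Finset.sum_congr rfl fun i _ => by ring)
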